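/- Let E be a real Hilbert space, X ⊆ E a nonempty closed convex set, and H : E → ℝ a convex differentiable function. Let x, x̄ ∈ X, let α ≥ 0, and set z = x + α(x − x̄). Let β > 0 and let x⁺ be the orthogonal projection of z − (1/β)∇H(z) onto X. If H(x⁺) ≤ H(z) + ⟪∇H(z), x⁺ − z⟫ + (β/2)‖x⁺ − z‖², then H(x) − H(x⁺) ≥ (β/2)(‖x⁺ − x‖² − α²‖x − x̄‖²). -/

import Mathlib

open scoped RealInnerProductSpace

/-- Gradient inequality for a convex differentiable function. -/
lemma grad_ineq_aux {E : Type*} [NormedAddCommGroup E] [InnerProductSpace ℝ E]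
    [CompleteSpace E] (H : E → ℝ) (H' : E → E) (hHcv : ConvexOn ℝ Set.univ H)
    (hHd : ∀ u : E, HasGradientAt H (H' u) u) (a b : E) :
    H a + ⟪H' a, b - a⟫ ≤ H b := by
  set g : ℝ → E := fun t => a + t • (b - a) with hg
  have hgd : HasDerivAt g (b - a) 0 := by
    simpa [hg] using ((hasDerivAt_id (0:ℝ)).smul_const (b - a)).const_add a
  have hcomp : HasDerivAt (H ∘ g) ⟪H' a, b - a⟫ 0 := by
    have h1 : HasFDerivAt H ((InnerProductSpace.toDual ℝ E) (H' a)) a := hHd a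
    have h1' : HasFDerivAt H ((InnerProductSpace.toDual ℝ E) (H' a)) (g 0) := by
      simpa [hg] using h1
    simpa using h1'.comp_hasDerivAt 0 hgd
  have hgcv : ConvexOn ℝ Set.univ (H ∘ g) := by
    have : (H ∘ g) = H ∘ (AffineMap.lineMap a b) := by
      funext t
      simp only [Function.comp_apply, hg, AffineMap.lineMap_apply_module]
      congr 1
      module
    rw [this]
    have := hHcv.comp_affineMap (AffineMap.lineMap a b : ℝ →ᵃ[ℝ] E)
    simpa using this
  have hslope := hgcv.le_slope_of_hasDerivAt (Set.mem_univ (0:ℝ)) (Set.mem_univ (1:ℝ))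
    one_pos hcomp
  have hg0 : H (g 0) = H a := by simp [hg]
  have hg1 : H (g 1) = H b := by simp [hg]
  rw [slope_def_field] at hslope
  simp only [Function.comp_apply, hg0, hg1] at hslope
  linarith

/-- Extrapolated projected-gradient descent lemma (Lemma 3, Xu–Yin). -/
theorem stmt0 {E : Type*} [NormedAddCommGroup E] [InnerProductSpace ℝ E] [CompleteSpace E]
    (X : Set E) (hXne : X.Nonempty) (hXcl : IsClosed X) (hXcv : Convex ℝ X)
    (H : E → ℝ) (H' : E → E)
    (hHcv : ConvexOn ℝ Set.univ H)
    (hHd : ∀ u : E, HasGradientAt H (H' u) u)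
    (x xbar : E) (hx : x ∈ X) (hxbar : xbar ∈ X)
    (α : ℝ) (hα : 0 ≤ α) (z : E) (hz : z = x + α • (x - xbar))
    (β : ℝ) (hβ : 0 < β)
    (xp : E) (hxpX : xp ∈ X)
    (hproj : ∀ w ∈ X, ‖xp - (z - β⁻¹ • H' z)‖ ≤ ‖w - (z - β⁻¹ • H' z)‖)
    (hdesc : H xp ≤ H z + ⟪H' z, xp - z⟫ + β / 2 * ‖xp - z‖ ^ 2) :
    H x - H xp ≥ β / 2 * (‖xp - x‖ ^ 2 - α ^ 2 * ‖x - xbar‖ ^ 2) := by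
  set u : E := z - β⁻¹ • H' z with hu
  -- variational inequality
  have hinf : ‖u - xp‖ = ⨅ w : X, ‖u - w‖ := by
    haveI : Nonempty X := ⟨⟨xp, hxpX⟩⟩
    refine le_antisymm
      (le_ciInf fun w => by rw [norm_sub_rev, norm_sub_rev u (w : E)]; exact hproj w w.2)
      (ciInf_le ⟨0, by rintro r ⟨w, rfl⟩; exact norm_nonneg _⟩ (⟨xp, hxpX⟩ : X))
  have hvar : ⟪u - xp, x - xp⟫ ≤ 0 :=
    ((norm_eq_iInf_iff_real_inner_le_zero hXcv hxpX).mp hinf) x hx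
  have hexp : ⟪u - xp, x - xp⟫ = ⟪z - xp, x - xp⟫ - β⁻¹ * ⟪H' z, x - xp⟫ := by
    rw [hu]
    rw [show z - β⁻¹ • H' z - xp = (z - xp) - β⁻¹ • H' z by abel]
    rw [inner_sub_left, real_inner_smul_left]
  have hkey : β * ⟪z - xp, x - xp⟫ ≤ ⟪H' z, x - xp⟫ := by
    rw [hexp] at hvar
    have : ⟪z - xp, x - xp⟫ ≤ β⁻¹ * ⟪H' z, x - xp⟫ := by linarith
    calc β * ⟪z - xp, x - xp⟫ ≤ β * (β⁻¹ * ⟪H' z, x - xp⟫) := by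
          exact mul_le_mul_of_nonneg_left this hβ.le
      _ = ⟪H' z, x - xp⟫ := by field_simp
  -- polarization
  have hpol : 2 * ⟪z - xp, x - xp⟫ = ‖z - xp‖ ^ 2 + ‖x - xp‖ ^ 2 - ‖z - x‖ ^ 2 := by
    have := norm_sub_sq_real (z - xp) (x - xp)
    rw [show z - xp - (x - xp) = z - x by abel] at this
    linarith
  -- gradient inequality
  have hgrad : H z + ⟪H' z, x - z⟫ ≤ H x := grad_ineq_aux H H' hHcv hHd z x
  have hsplit : ⟪H' z, x - z⟫ = ⟪H' z, x - xp⟫ + ⟪H' z, xp - z⟫ := by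
    rw [← inner_add_right]; congr 1; abel
  have hzx : ‖z - x‖ ^ 2 = α ^ 2 * ‖x - xbar‖ ^ 2 := by
    rw [hz, show x + α • (x - xbar) - x = α • (x - xbar) by abel, norm_smul]
    simp [abs_of_nonneg hα, mul_pow]
  have hnrev : ‖xp - x‖ = ‖x - xp‖ := norm_sub_rev _ _
  have hnrev2 : ‖xp - z‖ = ‖z - xp‖ := norm_sub_rev _ _
  have h5 : β * ⟪z - xp, x - xp⟫ = β / 2 * (‖z - xp‖ ^ 2 + ‖x - xp‖ ^ 2 - ‖z - x‖ ^ 2) := by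
    rw [show β * ⟪z - xp, x - xp⟫ = β / 2 * (2 * ⟪z - xp, x - xp⟫) by ring, hpol]
  rw [hnrev2] at hdesc
  rw [hzx] at h5
  rw [ge_iff_le, hnrev]
  linarith
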